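/- Let α, β, k > 0 and ζ ≥ 0 with 2k > α, and let v : ℝ → ℝ be continuously differentiable on [0,∞) with v(t) ≥ 0 for all t ≥ 0 and v'(t) ≤ -α·v(t) + (e^{-k t}·ζ + β)·√(v(t)) for all t ≥ 0. Then for all t ≥ 0, v(t) ≤ ( e^{-α t/2}·(√(v(0)) + ζ/(2k - α)) + β/α )². -/

import Mathlib

/-- Second inequality of the technical Gronwall-type Lemma A.1, in the case `2k > α`:
for a nonnegative continuously differentiable function `v` on `[0,∞)` satisfying
`v' t ≤ -α v t + (e^{-k t} ζ + β) √(v t)`, one has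
`v t ≤ (e^{-α t/2} (√(v 0) + ζ/(2k-α)) + β/α)²`. -/
theorem gronwall_sqrt_exp
    (α β k ζ : ℝ) (hα : 0 < α) (hβ : 0 < β) (hk : 0 < k) (hζ : 0 ≤ ζ)
    (h2k : α < 2 * k)
    (v v' : ℝ → ℝ)
    (hderiv : ∀ t ∈ Set.Ici (0 : ℝ), HasDerivWithinAt v (v' t) (Set.Ici 0) t)
    (hcont : ContinuousOn v' (Set.Ici 0))
    (hnonneg : ∀ t ≥ (0 : ℝ), 0 ≤ v t)
    (hineq : ∀ t ≥ (0 : ℝ),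
      v' t ≤ -α * v t + (Real.exp (-k * t) * ζ + β) * Real.sqrt (v t)) :
    ∀ t ≥ (0 : ℝ),
      v t ≤ (Real.exp (-α * t / 2) * (Real.sqrt (v 0) + ζ / (2 * k - α)) + β / α) ^ 2 := by
  have h2ka : 0 < 2 * k - α := by linarith
  set c : ℝ := ζ / (2 * k - α) with hc
  have hc0 : 0 ≤ c := div_nonneg hζ h2ka.le
  -- Main estimate with regularization parameter ε
  have key : ∀ ε : ℝ, 0 < ε → ∀ t ≥ (0 : ℝ),
      Real.sqrt (v t) ≤ Real.exp (-α * t / 2) * (Real.sqrt (v 0 + ε ^ 2) + c)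
        + (β + α * ε) / α := by
    intro ε hε
    set w : ℝ → ℝ := fun t => Real.sqrt (v t + ε ^ 2) with hwdef
    have hvpos : ∀ t ≥ (0 : ℝ), 0 < v t + ε ^ 2 := fun t ht =>
      add_pos_of_nonneg_of_pos (hnonneg t ht) (by positivity)
    have hwpos : ∀ t ≥ (0 : ℝ), 0 < w t := fun t ht => Real.sqrt_pos.2 (hvpos t ht)
    have hwge : ∀ t ≥ (0 : ℝ), ε ≤ w t := by
      intro t ht
      have : Real.sqrt (ε ^ 2) ≤ w t := Real.sqrt_le_sqrt (by linarith [hnonneg t ht])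
      rwa [Real.sqrt_sq hε.le] at this
    have hwsq : ∀ t ≥ (0 : ℝ), w t ^ 2 = v t + ε ^ 2 := fun t ht =>
      Real.sq_sqrt (hvpos t ht).le
    have hsle : ∀ t ≥ (0 : ℝ), Real.sqrt (v t) ≤ w t := fun t ht =>
      Real.sqrt_le_sqrt (by nlinarith [sq_nonneg ε])
    -- derivative of w
    have hw : ∀ t ∈ Set.Ici (0 : ℝ),
        HasDerivWithinAt w (1 / (2 * w t) * v' t) (Set.Ici 0) t := by
      intro t ht
      have h1 : HasDerivWithinAt (fun s => v s + ε ^ 2) (v' t) (Set.Ici 0) t :=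
        (hderiv t ht).add_const _
      have h2 := (Real.hasDerivAt_sqrt (hvpos t ht).ne').comp_hasDerivWithinAt t h1
      exact h2
    -- differential inequality for w
    have hmain : ∀ t ≥ (0 : ℝ),
        α / 2 * w t + 1 / (2 * w t) * v' t
          ≤ (Real.exp (-k * t) * ζ + β + α * ε) / 2 := by
      intro t ht
      set W := w t with hW
      set S := Real.sqrt (v t) with hS
      have hW0 : 0 < W := hwpos t ht
      have hE : 0 < Real.exp (-k * t) := Real.exp_pos _
      have hSW : S ≤ W := hsle t ht
      have hS0 : 0 ≤ S := Real.sqrt_nonneg _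
      have hεW : ε ≤ W := hwge t ht
      have hvW : v t = W ^ 2 - ε ^ 2 := by rw [hW]; linarith [hwsq t ht]
      have h1 : v' t ≤ -α * W ^ 2 + α * ε * W + (Real.exp (-k * t) * ζ + β) * W := by
        have := hineq t ht
        nlinarith [mul_le_mul_of_nonneg_left hSW (by positivity :
          (0:ℝ) ≤ Real.exp (-k * t) * ζ + β), mul_nonneg hα.le (mul_nonneg hε.le (by linarith : (0:ℝ) ≤ W - ε))]
      calc α / 2 * W + 1 / (2 * W) * v' t
          ≤ α / 2 * W + 1 / (2 * W) * (-α * W ^ 2 + α * ε * W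
              + (Real.exp (-k * t) * ζ + β) * W) :=
            add_le_add_right (mul_le_mul_of_nonneg_left h1 (by positivity)) _
        _ = (Real.exp (-k * t) * ζ + β + α * ε) / 2 := by
            field_simp
            ring
    -- the auxiliary function F and its monotonicity
    set D : ℝ := (β + α * ε) / α with hD
    have hD0 : 0 < D := by positivity
    set F : ℝ → ℝ := fun t => Real.exp (α / 2 * t) * w t
      + c * Real.exp ((α / 2 - k) * t) - D * Real.exp (α / 2 * t) with hF
    set F' : ℝ → ℝ := fun t =>
      (Real.exp (α / 2 * t) * (α / 2) * w t + Real.exp (α / 2 * t) * (1 / (2 * w t) * v' t))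
        + c * (Real.exp ((α / 2 - k) * t) * (α / 2 - k))
        - D * (Real.exp (α / 2 * t) * (α / 2)) with hF'
    have hFd : ∀ t ∈ Set.Ici (0 : ℝ), HasDerivWithinAt F (F' t) (Set.Ici 0) t := by
      intro t ht
      have he1 : HasDerivAt (fun s : ℝ => Real.exp (α / 2 * s))
          (Real.exp (α / 2 * t) * (α / 2)) t := by
        simpa using ((hasDerivAt_id t).const_mul (α / 2)).exp
      have he2 : HasDerivAt (fun s : ℝ => Real.exp ((α / 2 - k) * s))
          (Real.exp ((α / 2 - k) * t) * (α / 2 - k)) t := by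
        simpa using ((hasDerivAt_id t).const_mul (α / 2 - k)).exp
      exact ((he1.hasDerivWithinAt.mul (hw t ht)).add
        ((he2.hasDerivWithinAt).const_mul c)).sub ((he1.hasDerivWithinAt).const_mul D)
    have hF'le : ∀ t ∈ Set.Ici (0 : ℝ), F' t ≤ 0 := by
      intro t ht
      have ht' : (0:ℝ) ≤ t := ht
      have h1 := hmain t ht'
      have hexp : 0 < Real.exp (α / 2 * t) := Real.exp_pos _
      have hprod : Real.exp (α / 2 * t) * Real.exp (-k * t)
          = Real.exp ((α / 2 - k) * t) := by
        rw [← Real.exp_add]; ring_nf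
      have h2 : Real.exp (α / 2 * t) * (α / 2 * w t + 1 / (2 * w t) * v' t)
          ≤ Real.exp (α / 2 * t) * ((Real.exp (-k * t) * ζ + β + α * ε) / 2) :=
        mul_le_mul_of_nonneg_left h1 hexp.le
      have e1 : c * (Real.exp ((α / 2 - k) * t) * (α / 2 - k))
          = -(ζ / 2) * Real.exp ((α / 2 - k) * t) := by
        rw [hc]; field_simp; ring
      have e2 : D * (Real.exp (α / 2 * t) * (α / 2))
          = (β + α * ε) / 2 * Real.exp (α / 2 * t) := by
        rw [hD]; field_simp
      have h3 : Real.exp (α / 2 * t) * ((Real.exp (-k * t) * ζ + β + α * ε) / 2)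
          = ζ / 2 * Real.exp ((α / 2 - k) * t)
            + (β + α * ε) / 2 * Real.exp (α / 2 * t) := by
        rw [← hprod]; ring
      have h4 : Real.exp (α / 2 * t) * (α / 2) * w t
            + Real.exp (α / 2 * t) * (1 / (2 * w t) * v' t)
          = Real.exp (α / 2 * t) * (α / 2 * w t + 1 / (2 * w t) * v' t) := by ring
      simp only [hF']
      linarith [h2, e1, e2, h3, h4]
    have hFcont : ContinuousOn F (Set.Ici 0) := fun t ht =>
      (hFd t ht).continuousWithinAt
    have hanti : AntitoneOn F (Set.Ici 0) := by
      apply antitoneOn_of_hasDerivWithinAt_nonpos (convex_Ici 0) hFcont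
      · intro t ht
        rw [interior_Ici] at ht ⊢
        exact (hFd t (Set.Ioi_subset_Ici_self ht)).mono Set.Ioi_subset_Ici_self
      · intro t ht
        rw [interior_Ici] at ht
        exact hF'le t (Set.Ioi_subset_Ici_self ht)
    -- conclude the bound on w, hence on sqrt (v t)
    intro t ht
    have hFt : F t ≤ F 0 := hanti Set.self_mem_Ici ht ht
    simp only [hF] at hFt
    rw [mul_zero, Real.exp_zero] at hFt
    simp only [mul_zero, Real.exp_zero, mul_one, one_mul] at hFt
    have hexp : 0 < Real.exp (α / 2 * t) := Real.exp_pos _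
    have hexple : Real.exp (α / 2 * t) * Real.exp (-α * t / 2) = 1 := by
      rw [← Real.exp_add]; ring_nf; exact Real.exp_zero
    have hone : (1:ℝ) ≤ Real.exp (α / 2 * t) :=
      Real.one_le_exp (by positivity)
    have hw0 : w 0 = Real.sqrt (v 0 + ε ^ 2) := rfl
    -- from hFt: exp(αt/2) * w t ≤ w 0 + c + D * exp(αt/2)  (dropping nonneg terms)
    have h4 : Real.exp (α / 2 * t) * w t ≤ w 0 + c + D * Real.exp (α / 2 * t) := by
      have hcexp : 0 ≤ c * Real.exp ((α / 2 - k) * t) :=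
        mul_nonneg hc0 (Real.exp_pos _).le
      linarith [hFt, hcexp, hD0.le]
    have h5 : w t ≤ Real.exp (-α * t / 2) * (w 0 + c) + D := by
      have := mul_le_mul_of_nonneg_left h4 (Real.exp_pos (-α * t / 2)).le
      calc w t = Real.exp (-α * t / 2) * (Real.exp (α / 2 * t) * w t) := by
            rw [show Real.exp (-α * t / 2) * (Real.exp (α / 2 * t) * w t)
              = Real.exp (α / 2 * t) * Real.exp (-α * t / 2) * w t by ring, hexple, one_mul]
        _ ≤ Real.exp (-α * t / 2) * (w 0 + c + D * Real.exp (α / 2 * t)) := this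
        _ = Real.exp (-α * t / 2) * (w 0 + c)
              + D * (Real.exp (α / 2 * t) * Real.exp (-α * t / 2)) := by ring
        _ = Real.exp (-α * t / 2) * (w 0 + c) + D := by rw [hexple, mul_one]
    calc Real.sqrt (v t) ≤ w t := hsle t ht
      _ ≤ Real.exp (-α * t / 2) * (Real.sqrt (v 0 + ε ^ 2) + c) + D := by
          rw [← hw0]; exact h5
  -- pass to the limit ε → 0⁺
  intro t ht
  have hsqrt : Real.sqrt (v t)
      ≤ Real.exp (-α * t / 2) * (Real.sqrt (v 0) + c) + β / α := by
    have htend : Filter.Tendsto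
        (fun ε : ℝ => Real.exp (-α * t / 2) * (Real.sqrt (v 0 + ε ^ 2) + c)
          + (β + α * ε) / α)
        (nhdsWithin 0 (Set.Ioi 0))
        (nhds (Real.exp (-α * t / 2) * (Real.sqrt (v 0) + c) + β / α)) := by
      have hcontf : Continuous (fun ε : ℝ =>
          Real.exp (-α * t / 2) * (Real.sqrt (v 0 + ε ^ 2) + c) + (β + α * ε) / α) :=
        (continuous_const.mul ((Real.continuous_sqrt.comp
          (continuous_const.add (continuous_pow 2))).add continuous_const)).add
          ((continuous_const.add (continuous_const.mul continuous_id)).div_const α)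
      have h0 : Real.exp (-α * t / 2) * (Real.sqrt (v 0 + (0:ℝ) ^ 2) + c)
          + (β + α * 0) / α
          = Real.exp (-α * t / 2) * (Real.sqrt (v 0) + c) + β / α := by norm_num
      rw [← h0]
      exact (hcontf.tendsto 0).mono_left nhdsWithin_le_nhds
    refine ge_of_tendsto htend ?_
    filter_upwards [self_mem_nhdsWithin] with ε hε
    exact key ε hε t ht
  have hrhs : 0 ≤ Real.exp (-α * t / 2) * (Real.sqrt (v 0) + c) + β / α := by
    positivity
  calc v t = Real.sqrt (v t) ^ 2 := (Real.sq_sqrt (hnonneg t ht)).symm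
    _ ≤ (Real.exp (-α * t / 2) * (Real.sqrt (v 0) + c) + β / α) ^ 2 :=
        pow_le_pow_left₀ (Real.sqrt_nonneg _) hsqrt 2
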